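/- For a partition λ and positive integers r, s, the rs-weight of λ equals the sum over j ∈ ℤ/sℤ of the r-weights of the components λ^(j) of the s-quotient of λ. In particular, λ is an rs-core if and only if every component of its s-quotient is an r-core. -/

import Mathlib

open Classical

/-- A partition: an infinite weakly decreasing sequence of non-negative integers
with finite sum.  Here `f n` denotes the part `λ_{n+1}`. -/
structure SeqPartition where
  f : ℕ → ℕ
  antitone : ∀ ⦃m n : ℕ⦄, m ≤ n → f n ≤ f m
  eventually_zero : ∃ N, ∀ n, N ≤ n → f n = 0

instance : Inhabited SeqPartition :=
  ⟨⟨fun _ => 0, fun _ _ _ => le_rfl, ⟨0, fun _ _ => rfl⟩⟩⟩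

namespace SeqPartition

/-- The beta-set `β_r(λ) = {λ_i - i + r : i ≥ 1}`. -/
def beta (r : ℤ) (l : SeqPartition) : Set ℤ :=
  {x | ∃ n : ℕ, x = (l.f n : ℤ) - (n + 1) + r}

/-- The size `|λ|` of a partition. -/
noncomputable def size (l : SeqPartition) : ℕ := ∑ᶠ n, l.f n

/-- The partition whose beta-set (for some shift `r`) is `B`, if it exists. -/
noncomputable def ofBeta (B : Set ℤ) : SeqPartition :=
  if h : ∃ l : SeqPartition, ∃ r : ℤ, beta r l = B then h.choose else default

/-- The beta-set of the `s`-core: beads pushed up their runners as far as possible.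
A position `x` is occupied iff the number of beads of `B` weakly above it on its runner
exceeds the number of gaps strictly below it on its runner. -/
def coreBeta (s : ℕ) (B : Set ℤ) : Set ℤ :=
  {x | ({y : ℤ | y ∉ B ∧ y ≡ x [ZMOD (s : ℤ)] ∧ y < x}).ncard
      < ({b : ℤ | b ∈ B ∧ b ≡ x [ZMOD (s : ℤ)] ∧ x ≤ b}).ncard}

/-- The `s`-core of a partition. -/
noncomputable def core (s : ℕ) (l : SeqPartition) : SeqPartition :=
  ofBeta (coreBeta s (beta 0 l))

/-- `λ` is an `s`-core. -/
def IsCore (s : ℕ) (l : SeqPartition) : Prop := core s l = l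

/-- The `s`-weight of `λ`. -/
noncomputable def wt (s : ℕ) (l : SeqPartition) : ℕ := (size l - size (core s l)) / s

/-- The component of the `s`-quotient of `λ` indexed by `j : ZMod s`. -/
noncomputable def quot (s : ℕ) (l : SeqPartition) (j : ZMod s) : SeqPartition :=
  ofBeta {z : ℤ | ((j.val : ℤ) + (s : ℤ) * z) ∈ beta 0 l}

/-- The `s`-set entry `Γ_j(λ)`: the smallest integer in the class `j` mod `s`
not lying in the beta-set of the `s`-core of `λ`. -/
noncomputable def sSet (s : ℕ) (l : SeqPartition) (j : ZMod s) : ℤ :=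
  sInf {x : ℤ | (x : ZMod s) = j ∧ x ∉ beta 0 (core s l)}

/-- `λ` is an `[s:t]`-core. -/
def IsGenCore (s t : ℕ) (l : SeqPartition) : Prop :=
  wt s (core t l) = wt s l

/-- The level `t` action of the generator `w_i` of the affine symmetric group `W_s` on `ℤ`. -/
def genActZ (s t : ℕ) (i : ZMod s) (n : ℤ) : ℤ :=
  if (n : ZMod s) = (i - 1) * (t : ZMod s) - ((((s : ℤ) - 1) * ((t : ℤ) - 1) / 2 : ℤ) : ZMod s)
    then n + t
  else if (n : ZMod s) = i * (t : ZMod s) - ((((s : ℤ) - 1) * ((t : ℤ) - 1) / 2 : ℤ) : ZMod s)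
    then n - t
  else n

/-- The level `t` action of the generator `w_i` of `W_s` on partitions, via beta-sets. -/
noncomputable def genAct (s t : ℕ) (i : ZMod s) (l : SeqPartition) : SeqPartition :=
  ofBeta (genActZ s t i '' beta 0 l)

/-- The action of a word in the generators of `W_s`, at level `t`, on partitions. -/
noncomputable def wordAct (s t : ℕ) (w : List (ZMod s)) (l : SeqPartition) : SeqPartition :=
  w.foldr (genAct s t) l

/-- `λ` and `μ` lie in the same orbit for the level `t` action of `W_s`. -/
def SameOrbit (s t : ℕ) (l m : SeqPartition) : Prop :=
  ∃ w : List (ZMod s), wordAct s t w l = m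

/-- `λ` and `μ` lie in the same orbit for the commuting actions of `W_s` (level `t`)
and `W_t` (level `s`). -/
def SameOrbit2 (s t : ℕ) (l m : SeqPartition) : Prop :=
  ∃ a : List (ZMod s), ∃ b : List (ZMod t), wordAct s t a (wordAct t s b l) = m

/-- The `t`-weighted `s`-quotient of `λ`: the multiset of pairs
`(Γ_i(λ) + tℤ, λ^(i))` over `i ∈ ℤ/sℤ`. -/
noncomputable def twq (s t : ℕ) (l : SeqPartition) : Multiset (ZMod t × SeqPartition) :=
  ((List.range s).map (fun i =>
    (((sSet s l (i : ZMod s) : ℤ) : ZMod t), quot s l (i : ZMod s))) : Multiset _)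

/-- The largest `(s,t)`-core `κ_{s,t}`: the partition whose beta-set is the set of
integers not expressible as a non-negative integer combination of `s` and `t`. -/
noncomputable def kappa (s t : ℕ) : SeqPartition :=
  ofBeta {x : ℤ | ¬ ∃ a b : ℕ, x = (a : ℤ) * s + (b : ℤ) * t}

end SeqPartition

namespace PfAux
open Set

def Quasi (B : Set ℤ) : Prop :=
  (∃ a : ℤ, ∀ x : ℤ, x < a → x ∈ B) ∧ (∃ b : ℤ, ∀ x : ℤ, b ≤ x → x ∉ B)

lemma Quasi.finAbove {B : Set ℤ} (hB : Quasi B) (z : ℤ) : (B ∩ Set.Ici z).Finite := by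
  obtain ⟨b, hb⟩ := hB.2
  apply (Set.finite_Ico z b).subset
  rintro x ⟨hx, hz⟩
  exact ⟨hz, lt_of_not_ge fun h => hb x h hx⟩

lemma Quasi.finBelow {B : Set ℤ} (hB : Quasi B) (z : ℤ) : (Bᶜ ∩ Set.Iio z).Finite := by
  obtain ⟨a, ha⟩ := hB.1
  apply (Set.finite_Icc a z).subset
  rintro x ⟨hx, hz⟩
  exact ⟨le_of_not_gt fun h => hx (ha x h), le_of_lt hz⟩

noncomputable def Hc (B : Set ℤ) (z : ℤ) : ℕ := (B ∩ Set.Ici z).ncard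
noncomputable def Gc (B : Set ℤ) (z : ℤ) : ℕ := (Bᶜ ∩ Set.Iio z).ncard
noncomputable def chg (B : Set ℤ) : ℤ := (Hc B 0 : ℤ) - (Gc B 0 : ℤ)

lemma Hc_step {B : Set ℤ} (hB : Quasi B) (z : ℤ) :
    Hc B z = Hc B (z + 1) + (if z ∈ B then 1 else 0) := by
  by_cases h : z ∈ B
  · have h1 : B ∩ Set.Ici z = insert z (B ∩ Set.Ici (z + 1)) := by
      ext x
      simp only [Set.mem_inter_iff, Set.mem_Ici, Set.mem_insert_iff]
      constructor
      · rintro ⟨hx, hz⟩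
        rcases eq_or_ne x z with rfl | hne
        · exact Or.inl rfl
        · exact Or.inr ⟨hx, by omega⟩
      · rintro (rfl | ⟨hx, hz⟩)
        · exact ⟨h, le_rfl⟩
        · exact ⟨hx, by omega⟩
    rw [Hc, Hc, h1, Set.ncard_insert_of_notMem (by simp) (hB.finAbove (z+1))]
    simp [h]
  · have h1 : B ∩ Set.Ici z = B ∩ Set.Ici (z + 1) := by
      ext x
      simp only [Set.mem_inter_iff, Set.mem_Ici]
      constructor
      · rintro ⟨hx, hz⟩
        refine ⟨hx, ?_⟩
        rcases eq_or_ne x z with rfl | hne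
        · exact absurd hx h
        · omega
      · rintro ⟨hx, hz⟩; exact ⟨hx, by omega⟩
    rw [Hc, Hc, h1]
    simp [h]

lemma Gc_step {B : Set ℤ} (hB : Quasi B) (z : ℤ) :
    Gc B (z + 1) = Gc B z + (if z ∈ B then 0 else 1) := by
  by_cases h : z ∈ B
  · have h1 : Bᶜ ∩ Set.Iio (z + 1) = Bᶜ ∩ Set.Iio z := by
      ext x
      simp only [Set.mem_inter_iff, Set.mem_Iio, Set.mem_compl_iff]
      constructor
      · rintro ⟨hx, hz⟩
        refine ⟨hx, ?_⟩
        rcases eq_or_ne x z with rfl | hne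
        · exact absurd h hx
        · omega
      · rintro ⟨hx, hz⟩; exact ⟨hx, by omega⟩
    rw [Gc, Gc, h1]; simp [h]
  · have h1 : Bᶜ ∩ Set.Iio (z + 1) = insert z (Bᶜ ∩ Set.Iio z) := by
      ext x
      simp only [Set.mem_inter_iff, Set.mem_Iio, Set.mem_compl_iff, Set.mem_insert_iff]
      constructor
      · rintro ⟨hx, hz⟩
        rcases eq_or_ne x z with rfl | hne
        · exact Or.inl rfl
        · exact Or.inr ⟨hx, by omega⟩
      · rintro (rfl | ⟨hx, hz⟩)
        · exact ⟨h, by omega⟩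
        · exact ⟨hx, by omega⟩
    rw [Gc, Gc, h1, Set.ncard_insert_of_notMem (by simp) (hB.finBelow z)]
    simp [h]

lemma chg_at {B : Set ℤ} (hB : Quasi B) (z : ℤ) :
    (Hc B z : ℤ) - (Gc B z : ℤ) = chg B - z := by
  have key : ∀ w : ℤ, (Hc B w : ℤ) - Gc B w + w = (Hc B (w + 1) : ℤ) - Gc B (w + 1) + (w + 1) := by
    intro w
    have h1 := Hc_step hB w
    have h2 := Gc_step hB w
    by_cases hw : w ∈ B <;> simp [hw] at h1 h2 <;> omega
  have main : ∀ z : ℤ, (Hc B z : ℤ) - Gc B z + z = (Hc B 0 : ℤ) - Gc B 0 := by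
    intro z
    induction z using Int.induction_on with
    | zero => simp
    | succ n ih => have := key n; omega
    | pred n ih =>
      have h := key (-(n : ℤ) - 1)
      rw [show (-(n : ℤ) - 1) + 1 = -(n : ℤ) by ring] at h
      omega
  have := main z
  rw [chg]; omega

/-- the pair set: beads of `U` above (with offset `t`) gaps of `V`. -/
def Pc (U V : Set ℤ) (t : ℤ) : Set (ℤ × ℤ) := {p | p.1 ∈ U ∧ p.2 ∉ V ∧ p.2 < p.1 + t}

noncomputable def Dc (U V : Set ℤ) (t : ℤ) : ℕ := (Pc U V t).ncard

noncomputable def SZ (B : Set ℤ) : ℕ := Dc B B 0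

lemma Pc_finite {U V : Set ℤ} (hU : Quasi U) (hV : Quasi V) (t : ℤ) : (Pc U V t).Finite := by
  obtain ⟨a, ha⟩ := hV.1
  obtain ⟨b, hb⟩ := hU.2
  apply ((Set.finite_Icc (a - t) b).prod (Set.finite_Icc a (b + t))).subset
  rintro ⟨x, y⟩ ⟨hx, hy, hlt⟩
  have h1 : a ≤ y := le_of_not_gt fun h => hy (ha y h)
  have h2 : x < b := lt_of_not_ge fun h => hb x h hx
  exact ⟨⟨by omega, by omega⟩, ⟨by omega, by omega⟩⟩


/-- `swap B z` moves the bead at `z+1` down to the gap at `z`. -/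
def swap (B : Set ℤ) (z : ℤ) : Set ℤ := insert z (B \ {z + 1})

/-- the transposition of `z` and `z+1`. -/
def tr (z : ℤ) (x : ℤ) : ℤ := if x = z then z + 1 else if x = z + 1 then z else x

lemma tr_invol (z : ℤ) : Function.Involutive (tr z) := by
  intro x
  unfold tr
  split_ifs <;> omega

lemma mem_swap {B : Set ℤ} {z : ℤ} (h0 : z ∉ B) (h1 : z + 1 ∈ B) (x : ℤ) :
    x ∈ swap B z ↔ tr z x ∈ B := by
  unfold swap tr
  rcases eq_or_ne x z with rfl | hz
  · simp [h1]
  rcases eq_or_ne x (z + 1) with rfl | hz1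
  · simp only [if_neg hz, if_pos rfl]
    simp [h0]
  · simp [hz, hz1]

lemma preimage_tr_eq_image (z : ℤ) (S : Set ℤ) : tr z ⁻¹' S = tr z '' S := by
  ext x
  constructor
  · intro hx
    exact ⟨tr z x, hx, tr_invol z x⟩
  · rintro ⟨y, hy, rfl⟩
    simpa [tr_invol z y] using hy

lemma swap_quasi {B : Set ℤ} {z : ℤ} (hB : Quasi B) (h0 : z ∉ B) (h1 : z + 1 ∈ B) :
    Quasi (swap B z) := by
  obtain ⟨a, ha⟩ := hB.1
  obtain ⟨b, hb⟩ := hB.2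
  constructor
  · refine ⟨min a z, fun x hx => ?_⟩
    have : x ∈ B := ha x (by omega)
    exact Or.inr ⟨this, by simp; omega⟩
  · refine ⟨max b (z + 2), fun x hx => ?_⟩
    rintro (rfl | ⟨hxB, -⟩)
    · omega
    · exact hb x (by omega) hxB

lemma swap_chg {B : Set ℤ} (hB : Quasi B) {z : ℤ} (h0 : z ∉ B) (h1 : z + 1 ∈ B) :
    chg (swap B z) = chg B := by
  have hq := swap_quasi hB h0 h1
  have hH : Hc (swap B z) z = Hc B z := by
    have him : swap B z ∩ Set.Ici z = tr z ⁻¹' (B ∩ Set.Ici z) := by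
      ext x
      simp only [Set.mem_inter_iff, Set.mem_Ici, Set.mem_preimage, mem_swap h0 h1]
      have : z ≤ tr z x ↔ z ≤ x := by unfold tr; split_ifs <;> omega
      tauto
    rw [Hc, Hc, him, preimage_tr_eq_image,
      Set.ncard_image_of_injective _ (tr_invol z).injective]
  have hG : Gc (swap B z) z = Gc B z := by
    have him : (swap B z)ᶜ ∩ Set.Iio z = Bᶜ ∩ Set.Iio z := by
      ext x
      simp only [Set.mem_inter_iff, Set.mem_Iio, Set.mem_compl_iff, mem_swap h0 h1]
      have : x < z → tr z x = x := by unfold tr; intros; split_ifs <;> omega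
      constructor
      · rintro ⟨hx, hlt⟩
        exact ⟨fun hxB => hx (by rw [this hlt]; exact hxB), hlt⟩
      · rintro ⟨hx, hlt⟩
        exact ⟨fun hxB => hx (by rwa [this hlt] at hxB), hlt⟩
    rw [Gc, Gc, him]
  have e1 := chg_at hq z
  have e2 := chg_at hB z
  omega


/-- Effect on the pair count of pushing a bead of `U` (the first argument) down. -/
lemma Dc_swapL {U V : Set ℤ} (hU : Quasi U) (hV : Quasi V) {z : ℤ} (t : ℤ)
    (h0 : z ∉ U) (h1 : z + 1 ∈ U) :
    (Dc (swap U z) V t : ℤ) = Dc U V t - (if z + t ∈ V then 0 else 1) := by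
  classical
  have hfin : (Pc U V t).Finite := Pc_finite hU hV t
  have key : Pc (swap U z) V t
      = (fun p : ℤ × ℤ => (tr z p.1, p.2)) ⁻¹' (Pc U V t \ {(z + 1, z + t)}) := by
    ext ⟨x, w⟩
    simp only [Set.mem_preimage, Set.mem_diff, Set.mem_singleton_iff, Prod.mk.injEq]
    show ((x, w) ∈ Pc (swap U z) V t) ↔ _
    have hsw : ∀ y : ℤ, y ∈ swap U z ↔ tr z y ∈ U := mem_swap h0 h1
    simp only [Pc, Set.mem_setOf_eq, hsw]
    rcases eq_or_ne z x with rfl | hxz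
    · have htr : tr z z = z + 1 := by unfold tr; simp
      rw [htr]
      constructor
      · rintro ⟨-, hw, hlt⟩
        exact ⟨⟨h1, hw, by omega⟩, fun hc => by omega⟩
      · rintro ⟨⟨-, hw, hlt⟩, hne⟩
        refine ⟨h1, hw, ?_⟩
        rcases eq_or_ne w (z + t) with rfl | hwn
        · exact absurd ⟨rfl, rfl⟩ hne
        · omega
    rcases eq_or_ne (z + 1) x with rfl | hxz1
    · have htr : tr z (z + 1) = z := by unfold tr; split_ifs <;> omega
      rw [htr]
      constructor
      · rintro ⟨hzU, -, -⟩; exact absurd hzU h0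
      · rintro ⟨⟨hzU, -, -⟩, -⟩; exact absurd hzU h0
    · have htr : tr z x = x := by unfold tr; split_ifs <;> omega
      rw [htr]
      constructor
      · rintro ⟨hx, hw, hlt⟩
        exact ⟨⟨hx, hw, hlt⟩, fun hc => hxz1 hc.1.symm⟩
      · rintro ⟨⟨hx, hw, hlt⟩, -⟩
        exact ⟨hx, hw, hlt⟩
  have hinj : Function.Injective (fun p : ℤ × ℤ => (tr z p.1, p.2)) := by
    intro p q h
    simp only [Prod.mk.injEq] at h
    exact Prod.ext ((tr_invol z).injective h.1) h.2
  have hpre : ∀ A : Set (ℤ × ℤ), (fun p : ℤ × ℤ => (tr z p.1, p.2)) ⁻¹' A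
      = (fun p : ℤ × ℤ => (tr z p.1, p.2)) '' A := by
    intro A
    ext p
    constructor
    · intro hp
      refine ⟨(tr z p.1, p.2), hp, ?_⟩
      simp [tr_invol z p.1]
    · rintro ⟨q, hq, rfl⟩
      simpa [tr_invol z q.1] using hq
  have hcard : Dc (swap U z) V t = (Pc U V t \ ({(z + 1, z + t)} : Set (ℤ × ℤ))).ncard := by
    rw [Dc, key, hpre, Set.ncard_image_of_injective _ hinj]
  by_cases hv : z + t ∈ V
  · have hnm : ((z + 1, z + t) : ℤ × ℤ) ∉ Pc U V t := by
      rintro ⟨-, hc, -⟩; exact hc hv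
    have : Pc U V t \ ({(z + 1, z + t)} : Set (ℤ × ℤ)) = Pc U V t := by
      apply Set.diff_singleton_eq_self hnm
    rw [hcard, this, if_pos hv, Dc]
    omega
  · have hm : ((z + 1, z + t) : ℤ × ℤ) ∈ Pc U V t := ⟨h1, hv, by omega⟩
    have hsub : ({(z + 1, z + t)} : Set (ℤ × ℤ)) ⊆ Pc U V t := by
      rintro p rfl; exact hm
    have hle : 1 ≤ (Pc U V t).ncard := by
      have := Set.ncard_le_ncard hsub hfin
      simpa using this
    rw [hcard, Set.ncard_diff hsub (hfin.subset hsub), if_neg hv, Set.ncard_singleton, Dc]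
    omega

/-- Effect on the pair count of pushing a bead of `V` (the gap argument) down. -/
lemma Dc_swapR {U V : Set ℤ} (hU : Quasi U) (hV : Quasi V) {z : ℤ} (t : ℤ)
    (h0 : z ∉ V) (h1 : z + 1 ∈ V) :
    (Dc U (swap V z) t : ℤ) = Dc U V t - (if z + 1 - t ∈ U then 1 else 0) := by
  classical
  have hfin : (Pc U V t).Finite := Pc_finite hU hV t
  have key : Pc U (swap V z) t
      = (fun p : ℤ × ℤ => (p.1, tr z p.2)) ⁻¹' (Pc U V t \ {(z + 1 - t, z)}) := by
    ext ⟨x, w⟩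
    simp only [Set.mem_preimage, Set.mem_diff, Set.mem_singleton_iff, Prod.mk.injEq]
    show ((x, w) ∈ Pc U (swap V z) t) ↔ _
    have hsw : ∀ y : ℤ, y ∈ swap V z ↔ tr z y ∈ V := mem_swap h0 h1
    simp only [Pc, Set.mem_setOf_eq, hsw]
    rcases eq_or_ne z w with rfl | hwz
    · have htr : tr z z = z + 1 := by unfold tr; simp
      rw [htr]
      constructor
      · rintro ⟨-, hw, -⟩; exact absurd h1 hw
      · rintro ⟨⟨-, hw, -⟩, -⟩; exact absurd h1 hw
    rcases eq_or_ne (z + 1) w with rfl | hwz1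
    · have htr : tr z (z + 1) = z := by unfold tr; split_ifs <;> omega
      rw [htr]
      constructor
      · rintro ⟨hx, -, hlt⟩
        exact ⟨⟨hx, h0, by omega⟩, fun hc => by omega⟩
      · rintro ⟨⟨hx, -, hlt⟩, hne⟩
        refine ⟨hx, h0, ?_⟩
        rcases eq_or_ne x (z + 1 - t) with rfl | hxn
        · exact absurd ⟨rfl, rfl⟩ hne
        · omega
    · have htr : tr z w = w := by unfold tr; split_ifs <;> omega
      rw [htr]
      constructor
      · rintro ⟨hx, hw, hlt⟩
        exact ⟨⟨hx, hw, hlt⟩, fun hc => hwz hc.2.symm⟩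
      · rintro ⟨⟨hx, hw, hlt⟩, -⟩
        exact ⟨hx, hw, hlt⟩
  have hinj : Function.Injective (fun p : ℤ × ℤ => (p.1, tr z p.2)) := by
    intro p q h
    simp only [Prod.mk.injEq] at h
    exact Prod.ext h.1 ((tr_invol z).injective h.2)
  have hpre : ∀ A : Set (ℤ × ℤ), (fun p : ℤ × ℤ => (p.1, tr z p.2)) ⁻¹' A
      = (fun p : ℤ × ℤ => (p.1, tr z p.2)) '' A := by
    intro A
    ext p
    constructor
    · intro hp
      refine ⟨(p.1, tr z p.2), hp, ?_⟩
      simp [tr_invol z p.2]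
    · rintro ⟨q, hq, rfl⟩
      simpa [tr_invol z q.2] using hq
  have hcard : Dc U (swap V z) t = (Pc U V t \ ({(z + 1 - t, z)} : Set (ℤ × ℤ))).ncard := by
    rw [Dc, key, hpre, Set.ncard_image_of_injective _ hinj]
  by_cases hu : z + 1 - t ∈ U
  · have hm : ((z + 1 - t, z) : ℤ × ℤ) ∈ Pc U V t := ⟨hu, h0, by omega⟩
    have hsub : ({(z + 1 - t, z)} : Set (ℤ × ℤ)) ⊆ Pc U V t := by
      rintro p rfl; exact hm
    have hle : 1 ≤ (Pc U V t).ncard := by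
      have := Set.ncard_le_ncard hsub hfin
      simpa using this
    rw [hcard, Set.ncard_diff hsub (hfin.subset hsub), if_pos hu, Set.ncard_singleton, Dc]
    omega
  · have hnm : ((z + 1 - t, z) : ℤ × ℤ) ∉ Pc U V t := by
      rintro ⟨hc, -, -⟩; exact hu hc
    have : Pc U V t \ ({(z + 1 - t, z)} : Set (ℤ × ℤ)) = Pc U V t := by
      apply Set.diff_singleton_eq_self hnm
    rw [hcard, this, if_neg hu, Dc]
    omega

lemma SZ_swap {B : Set ℤ} (hB : Quasi B) {z : ℤ} (h0 : z ∉ B) (h1 : z + 1 ∈ B) :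
    (SZ (swap B z) : ℤ) = SZ B - 1 := by
  have hq := swap_quasi hB h0 h1
  have e1 : (Dc (swap B z) (swap B z) 0 : ℤ) = Dc B (swap B z) 0 - 0 := by
    rw [Dc_swapL hB hq 0 h0 h1]
    have : z + 0 ∈ swap B z := by left; omega
    rw [if_pos this]
  have e2 : (Dc B (swap B z) 0 : ℤ) = Dc B B 0 - 1 := by
    rw [Dc_swapR hB hB 0 h0 h1]
    have : z + 1 - 0 ∈ B := by simpa using h1
    rw [if_pos this]
  show (Dc (swap B z) (swap B z) 0 : ℤ) = (Dc B B 0 : ℤ) - 1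
  omega

lemma eq_Iio_of_SZ_zero {B : Set ℤ} (hB : Quasi B) (h : SZ B = 0) : B = Set.Iio (chg B) := by
  have hfin : (Pc B B 0).Finite := Pc_finite hB hB 0
  have hemp : Pc B B 0 = ∅ := (Set.ncard_eq_zero hfin).1 h
  have hlower : ∀ x y : ℤ, x ∈ B → y < x → y ∈ B := by
    intro x y hx hy
    by_contra hyB
    have : (x, y) ∈ Pc B B 0 := ⟨hx, hyB, by omega⟩
    rw [hemp] at this
    exact this
  obtain ⟨b, hb⟩ := hB.2
  obtain ⟨a, ha⟩ := hB.1
  obtain ⟨m, hm, hmin⟩ := Int.exists_least_of_bdd (P := fun x => x ∉ B)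
    ⟨a, fun x hx => le_of_not_gt fun hc => hx (ha x hc)⟩ ⟨b, hb b le_rfl⟩
  have hBm : B = Set.Iio m := by
    ext x
    simp only [Set.mem_Iio]
    constructor
    · intro hx
      by_contra hc
      push_neg at hc
      rcases eq_or_lt_of_le hc with rfl | hlt
      · exact hm hx
      · exact hm (hlower x m hx hlt)
    · intro hx
      by_contra hc
      exact absurd (hmin x hc) (by omega)
  have hchg : chg B = m := by
    have := chg_at hB m
    have hH : Hc B m = 0 := by
      rw [Hc, hBm]
      have he : Set.Iio m ∩ Set.Ici m = (∅ : Set ℤ) := by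
        ext x
        simp only [Set.mem_inter_iff, Set.mem_Iio, Set.mem_Ici, Set.mem_empty_iff_false]
        exact iff_of_false (by omega) not_false
      rw [he, Set.ncard_empty]
    have hG : Gc B m = 0 := by
      rw [Gc, hBm]
      have he : (Set.Iio m)ᶜ ∩ Set.Iio m = (∅ : Set ℤ) := by
        ext x
        simp only [Set.mem_inter_iff, Set.mem_Iio, Set.mem_compl_iff, Set.mem_empty_iff_false]
        exact iff_of_false (by omega) not_false
      rw [he, Set.ncard_empty]
    omega
  rw [hchg, ← hBm]

lemma exists_adj {B : Set ℤ} (hB : Quasi B) (h : SZ B ≠ 0) : ∃ z, z ∉ B ∧ z + 1 ∈ B := by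
  obtain ⟨⟨x, y⟩, hx, hy, hlt⟩ := Set.nonempty_of_ncard_ne_zero h
  obtain ⟨b, hb⟩ := hB.2
  obtain ⟨z, ⟨hz1, c, hc, hzc⟩, hzmax⟩ := Int.exists_greatest_of_bdd
    (P := fun g => g ∉ B ∧ ∃ c ∈ B, g < c)
    ⟨b, fun g hg => by
      obtain ⟨-, c, hc, hgc⟩ := hg
      have : c < b := lt_of_not_ge fun hcb => hb c hcb hc
      omega⟩
    ⟨y, hy, x, hx, by omega⟩
  refine ⟨z, hz1, ?_⟩
  by_contra hz2
  rcases eq_or_ne c (z + 1) with rfl | hne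
  · exact hz2 hc
  · have : z + 1 ≤ z := hzmax (z + 1) ⟨hz2, c, hc, by omega⟩
    omega

lemma quasi_ind (P : Set ℤ → Prop) (h0 : ∀ c : ℤ, P (Set.Iio c))
    (hstep : ∀ B z, Quasi B → z ∉ B → z + 1 ∈ B → P (swap B z) → P B) :
    ∀ B, Quasi B → P B := by
  suffices h : ∀ n B, Quasi B → SZ B = n → P B by
    intro B hB
    exact h (SZ B) B hB rfl
  intro n
  induction n using Nat.strong_induction_on with
  | _ n ih =>
    intro B hB hSZ
    rcases eq_or_ne n 0 with rfl | hn
    · rw [eq_Iio_of_SZ_zero hB hSZ]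
      exact h0 _
    · obtain ⟨z, hz0, hz1⟩ := exists_adj hB (by omega)
      have hsw := SZ_swap hB hz0 hz1
      exact hstep B z hB hz0 hz1
        (ih (n - 1) (by omega) _ (swap_quasi hB hz0 hz1) (by omega))

/-- The key invariant of pairs of runners. -/
noncomputable def Fq (U V : Set ℤ) : ℤ :=
  (Dc U V 1 : ℤ) + (Dc V U 0 : ℤ) - (SZ U : ℤ) - (SZ V : ℤ)

lemma Fq_swapL {U V : Set ℤ} (hU : Quasi U) (hV : Quasi V) {z : ℤ}
    (h0 : z ∉ U) (h1 : z + 1 ∈ U) : Fq (swap U z) V = Fq U V := by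
  have e1 := Dc_swapL hU hV 1 h0 h1
  have e2 := Dc_swapR hV hU 0 h0 h1
  have e3 := SZ_swap hU h0 h1
  unfold Fq
  rw [e1, e2, e3]
  rw [show z + 1 - 0 = z + 1 by ring] at *
  split_ifs <;> omega

lemma Fq_swapR {U V : Set ℤ} (hU : Quasi U) (hV : Quasi V) {z : ℤ}
    (h0 : z ∉ V) (h1 : z + 1 ∈ V) : Fq U (swap V z) = Fq U V := by
  have e1 := Dc_swapR hU hV 1 h0 h1
  have e2 := Dc_swapL hV hU 0 h0 h1
  have e3 := SZ_swap hV h0 h1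
  unfold Fq
  rw [e1, e2, e3]
  rw [show z + 1 - 1 = z by ring, show z + 0 = z by ring] at *
  split_ifs <;> omega

lemma chg_Iio (c : ℤ) : chg (Set.Iio c) = c := by
  have hq : Quasi (Set.Iio c) := ⟨⟨c, fun x hx => hx⟩, ⟨c, fun x hx => by simp; omega⟩⟩
  have := chg_at hq c
  have hH : Hc (Set.Iio c) c = 0 := by
    rw [Hc]
    have he : Set.Iio c ∩ Set.Ici c = (∅ : Set ℤ) := by
      ext x
      simp only [Set.mem_inter_iff, Set.mem_Iio, Set.mem_Ici, Set.mem_empty_iff_false]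
      exact iff_of_false (by omega) not_false
    rw [he, Set.ncard_empty]
  have hG : Gc (Set.Iio c) c = 0 := by
    rw [Gc]
    have he : (Set.Iio c)ᶜ ∩ Set.Iio c = (∅ : Set ℤ) := by
      ext x
      simp only [Set.mem_inter_iff, Set.mem_Iio, Set.mem_compl_iff, Set.mem_empty_iff_false]
      exact iff_of_false (by omega) not_false
    rw [he, Set.ncard_empty]
  omega

lemma quasi_Iio (c : ℤ) : Quasi (Set.Iio c) :=
  ⟨⟨c, fun x hx => hx⟩, ⟨c, fun x hx => by simp; omega⟩⟩

lemma Fq_inv {U V : Set ℤ} (hU : Quasi U) (hV : Quasi V) :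
    Fq U V = Fq (Set.Iio (chg U)) (Set.Iio (chg V)) := by
  have stepA : ∀ W, Quasi W → ∀ V', Quasi V' → Fq W V' = Fq (Set.Iio (chg W)) V' := by
    apply quasi_ind (P := fun W => ∀ V', Quasi V' → Fq W V' = Fq (Set.Iio (chg W)) V')
    · intro c V' hV'
      rw [chg_Iio]
    · intro B z hB h0 h1 ih V' hV'
      rw [← Fq_swapL hB hV' h0 h1, ih V' hV', swap_chg hB h0 h1]
  have stepB : ∀ W, Quasi W → ∀ U', Quasi U' → Fq U' W = Fq U' (Set.Iio (chg W)) := by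
    apply quasi_ind (P := fun W => ∀ U', Quasi U' → Fq U' W = Fq U' (Set.Iio (chg W)))
    · intro c U' hU'
      rw [chg_Iio]
    · intro B z hB h0 h1 ih U' hU'
      rw [← Fq_swapR hU' hB h0 h1, ih U' hU', swap_chg hB h0 h1]
  rw [stepA U hU V hV, stepB V hV _ (quasi_Iio _)]

open SeqPartition

def bseq (l : SeqPartition) (r : ℤ) (n : ℕ) : ℤ := (l.f n : ℤ) - (n + 1) + r

lemma bseq_strictAnti (l : SeqPartition) (r : ℤ) : StrictAnti (bseq l r) := by
  apply strictAnti_nat_of_succ_lt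
  intro n
  have h : l.f (n + 1) ≤ l.f n := l.antitone (Nat.le_succ n)
  unfold bseq
  push_cast
  omega

lemma range_bseq (l : SeqPartition) (r : ℤ) : Set.range (bseq l r) = beta r l := by
  ext x
  simp only [Set.mem_range, beta, Set.mem_setOf_eq, bseq]
  constructor
  · rintro ⟨n, rfl⟩; exact ⟨n, rfl⟩
  · rintro ⟨n, rfl⟩; exact ⟨n, rfl⟩

lemma beta_quasi (r : ℤ) (l : SeqPartition) : Quasi (beta r l) := by
  obtain ⟨N, hN⟩ := l.eventually_zero
  constructor
  · refine ⟨r - N - 1, fun x hx => ?_⟩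
    refine ⟨(r - 1 - x).toNat, ?_⟩
    rw [hN _ (by omega : N ≤ (r - 1 - x).toNat)]
    push_cast [Int.toNat_of_nonneg (show (0:ℤ) ≤ r - 1 - x by omega)]
    omega
  · refine ⟨(l.f 0 : ℤ) + r, fun x hx hmem => ?_⟩
    obtain ⟨n, rfl⟩ := hmem
    have h1 : l.f n ≤ l.f 0 := l.antitone (Nat.zero_le n)
    omega

lemma Hc_bseq (l : SeqPartition) (r : ℤ) (n : ℕ) : Hc (beta r l) (bseq l r n) = n + 1 := by
  have hset : beta r l ∩ Set.Ici (bseq l r n) = bseq l r '' (Set.Iic n) := by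
    ext x
    rw [← range_bseq]
    simp only [Set.mem_inter_iff, Set.mem_Ici, Set.mem_image, Set.mem_Iic, Set.mem_range]
    constructor
    · rintro ⟨⟨m, rfl⟩, hge⟩
      exact ⟨m, ((bseq_strictAnti l r).le_iff_ge).1 hge, rfl⟩
    · rintro ⟨m, hm, rfl⟩
      exact ⟨⟨m, rfl⟩, (bseq_strictAnti l r).antitone hm⟩
  rw [Hc, hset, Set.ncard_image_of_injective _ (bseq_strictAnti l r).injective]
  rw [show (Set.Iic n) = ↑(Finset.Iic n) by simp, Set.ncard_coe_finset, Nat.card_Iic]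

lemma chg_beta (r : ℤ) (l : SeqPartition) : chg (beta r l) = r := by
  obtain ⟨N, hN⟩ := l.eventually_zero
  have hzN : bseq l r N = r - N - 1 := by
    unfold bseq; rw [hN N le_rfl]; push_cast; ring
  have hG : Gc (beta r l) (bseq l r N) = 0 := by
    rw [Gc]
    have he : (beta r l)ᶜ ∩ Set.Iio (bseq l r N) = ∅ := by
      ext x
      simp only [Set.mem_inter_iff, Set.mem_compl_iff, Set.mem_Iio, Set.mem_empty_iff_false]
      rw [hzN]
      refine iff_of_false ?_ not_false
      rintro ⟨hnot, hlt⟩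
      apply hnot
      refine ⟨(r - 1 - x).toNat, ?_⟩
      rw [hN _ (by omega : N ≤ (r - 1 - x).toNat)]
      push_cast [Int.toNat_of_nonneg (show (0:ℤ) ≤ r - 1 - x by omega)]
      omega
    rw [he, Set.ncard_empty]
  have h1 := chg_at (beta_quasi r l) (bseq l r N)
  rw [Hc_bseq, hG] at h1
  omega

lemma Gc_bseq (l : SeqPartition) (r : ℤ) (n : ℕ) : (Gc (beta r l) (bseq l r n) : ℤ) = l.f n := by
  have h1 := chg_at (beta_quasi r l) (bseq l r n)
  rw [Hc_bseq, chg_beta] at h1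
  unfold bseq at h1 ⊢
  push_cast at h1 ⊢
  omega

lemma size_eq_sum (l : SeqPartition) {N : ℕ} (hN : ∀ n, N ≤ n → l.f n = 0) :
    size l = ∑ n ∈ Finset.range N, l.f n := by
  rw [size]
  apply finsum_eq_sum_of_support_subset
  intro n hn
  simp only [Function.mem_support] at hn
  simp only [Finset.coe_range, Set.mem_Iio]
  by_contra h
  exact hn (hN n (by omega))

lemma SZ_beta (r : ℤ) (l : SeqPartition) : SZ (beta r l) = size l := by
  classical
  obtain ⟨N, hN⟩ := l.eventually_zero
  set B := beta r l with hB
  have hq : Quasi B := beta_quasi r l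
  have hrange : ∀ x, x ∈ B ↔ ∃ n, bseq l r n = x := by
    intro x
    rw [hB, ← range_bseq]
    exact Iff.rfl
  have key : ∀ k : ℕ,
      ({p ∈ Pc B B 0 | ∃ n, n < k ∧ p.1 = bseq l r n}).ncard
        = ∑ n ∈ Finset.range k, l.f n := by
    intro k
    induction k with
    | zero => simp
    | succ k ih =>
      have hinjpair : Function.Injective (fun w : ℤ => (bseq l r k, w)) := by
        intro a b h
        simpa using congrArg Prod.snd h
      have hsplit : {p ∈ Pc B B 0 | ∃ n, n < k + 1 ∧ p.1 = bseq l r n}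
          = {p ∈ Pc B B 0 | ∃ n, n < k ∧ p.1 = bseq l r n}
            ∪ (fun w => (bseq l r k, w)) '' (Bᶜ ∩ Set.Iio (bseq l r k)) := by
        ext ⟨x, w⟩
        simp only [Set.mem_setOf_eq, Set.mem_union, Set.mem_image, Set.mem_inter_iff,
          Set.mem_compl_iff, Set.mem_Iio, Prod.mk.injEq]
        constructor
        · rintro ⟨⟨hx, hw, hlt⟩, n, hn, hxe⟩
          rcases Nat.lt_succ_iff_lt_or_eq.1 hn with h | rfl
          · exact Or.inl ⟨⟨hx, hw, hlt⟩, n, h, hxe⟩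
          · exact Or.inr ⟨w, ⟨hw, by omega⟩, hxe.symm, rfl⟩
        · rintro (⟨hp, n, hn, h1⟩ | ⟨y, ⟨hy, hlt⟩, h1, h2⟩)
          · exact ⟨hp, n, by omega, h1⟩
          · refine ⟨⟨?_, ?_, ?_⟩, k, by omega, h1.symm⟩
            · rw [← h1]; exact (hrange _).2 ⟨k, rfl⟩
            · rw [← h2]; exact hy
            · omega
      have hfin1 : ({p ∈ Pc B B 0 | ∃ n, n < k ∧ p.1 = bseq l r n}).Finite :=
        (Pc_finite hq hq 0).subset (fun p hp => hp.1)
      have hfin2 : ((fun w => (bseq l r k, w)) '' (Bᶜ ∩ Set.Iio (bseq l r k))).Finite :=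
        (hq.finBelow _).image _
      have hdis : Disjoint {p ∈ Pc B B 0 | ∃ n, n < k ∧ p.1 = bseq l r n}
          ((fun w => (bseq l r k, w)) '' (Bᶜ ∩ Set.Iio (bseq l r k))) := by
        rw [Set.disjoint_left]
        rintro ⟨x, w⟩ ⟨-, n, hn, hxe⟩ hmem
        obtain ⟨y, -, h1⟩ := hmem
        have hx1 : bseq l r k = x := congrArg Prod.fst h1
        have hxe' : x = bseq l r n := hxe
        have : k = n := (bseq_strictAnti l r).injective (hx1.trans hxe')
        omega
      rw [hsplit, Set.ncard_union_eq hdis hfin1 hfin2, ih,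
        Set.ncard_image_of_injective _ hinjpair, Finset.sum_range_succ]
      have h9 := Gc_bseq l r k
      rw [Gc, ← hB] at h9
      omega
  have hfull : Pc B B 0 = {p ∈ Pc B B 0 | ∃ n, n < N ∧ p.1 = bseq l r n} := by
    ext ⟨x, w⟩
    constructor
    · rintro ⟨hx, hw, hlt⟩
      obtain ⟨n, rfl⟩ := (hrange x).1 hx
      refine ⟨⟨hx, hw, hlt⟩, n, ?_, rfl⟩
      by_contra hn
      push_neg at hn
      have hg : Gc B (bseq l r n) = 0 := by
        have h2 := Gc_bseq l r n
        rw [← hB] at h2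
        rw [hN n hn] at h2
        omega
      have hemp := (Set.ncard_eq_zero (hq.finBelow (bseq l r n))).1 hg
      have hwmem : w ∈ Bᶜ ∩ Set.Iio (bseq l r n) := ⟨hw, by simpa using hlt⟩
      rw [hemp] at hwmem
      exact hwmem
    · exact fun hp => hp.1
  rw [size_eq_sum l hN, SZ, Dc, hfull, key N]

def zeroP : SeqPartition := ⟨fun _ => 0, fun _ _ _ => le_rfl, ⟨0, fun _ _ => rfl⟩⟩

lemma beta_zeroP (c : ℤ) : beta c zeroP = Set.Iio c := by
  ext x
  simp only [beta, Set.mem_setOf_eq, Set.mem_Iio, zeroP]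
  constructor
  · rintro ⟨n, rfl⟩
    push_cast
    omega
  · intro hx
    refine ⟨(c - 1 - x).toNat, ?_⟩
    push_cast [Int.toNat_of_nonneg (show (0:ℤ) ≤ c - 1 - x by omega)]
    omega

lemma exists_beta : ∀ B, Quasi B → ∃ (l : SeqPartition) (r : ℤ), beta r l = B := by
  apply quasi_ind
  · intro c
    exact ⟨zeroP, c, beta_zeroP c⟩
  · rintro B z hB h0 h1 ⟨l, r, hl⟩
    have hzmem : z ∈ Set.range (bseq l r) := by
      rw [range_bseq, hl]
      exact Or.inl rfl
    obtain ⟨k, hk⟩ := hzmem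
    have hz1mem : z + 1 ∉ beta r l := by
      rw [hl]
      rintro (h | ⟨-, hne⟩)
      · omega
      · exact hne rfl
    have hknz : ∀ m, m ≠ k → bseq l r m ≠ z := by
      intro m hm hc
      exact hm ((bseq_strictAnti l r).injective (by rw [hc, hk]))
    have hadjf : 0 < k → l.f k + 1 ≤ l.f (k - 1) := by
      intro hk0
      have h3 : bseq l r k < bseq l r (k - 1) := bseq_strictAnti l r (by omega)
      have h2 : bseq l r (k - 1) ≠ z + 1 := by
        intro hc
        exact hz1mem (by rw [← range_bseq]; exact ⟨k - 1, hc⟩)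
      rw [hk] at h3
      have h4 : z + 2 ≤ bseq l r (k - 1) := by omega
      unfold bseq at h4
      unfold bseq at hk
      omega
    refine ⟨⟨fun n => if n = k then l.f k + 1 else l.f n, ?_, ?_⟩, r, ?_⟩
    · intro m n hmn
      by_cases hm : m = k
      · by_cases hn : n = k
        · rw [if_pos hm, if_pos hn]
        · rw [if_pos hm, if_neg hn]
          have h5 : l.f n ≤ l.f k := by
            rw [← hm]
            exact l.antitone (by omega)
          omega
      · by_cases hn : n = k
        · rw [if_pos hn, if_neg hm]
          have hmk : m < k := by omega
          have h5 := hadjf (by omega)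
          have h6 : l.f (k - 1) ≤ l.f m := l.antitone (by omega)
          omega
        · rw [if_neg hm, if_neg hn]
          exact l.antitone hmn
    · obtain ⟨N, hN⟩ := l.eventually_zero
      refine ⟨max N (k + 1), fun n hn => ?_⟩
      rw [if_neg (by omega), hN n (by omega)]
    · have hbseq' : ∀ n : ℕ,
          ((if n = k then l.f k + 1 else l.f n : ℕ) : ℤ) - (n + 1) + r
            = if n = k then z + 1 else bseq l r n := by
        intro n
        by_cases hn : n = k
        · subst hn
          rw [if_pos rfl, if_pos rfl, ← hk]
          unfold bseq
          push_cast
          ring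
        · rw [if_neg hn, if_neg hn]
          rfl
      ext x
      simp only [beta, Set.mem_setOf_eq]
      constructor
      · rintro ⟨n, rfl⟩
        rw [hbseq' n]
        by_cases hn : n = k
        · rw [if_pos hn]
          exact h1
        · rw [if_neg hn]
          have hmem : bseq l r n ∈ swap B z := by
            rw [← hl, ← range_bseq]; exact ⟨n, rfl⟩
          rcases hmem with he | ⟨hmem, -⟩
          · exact absurd he (hknz n hn)
          · exact hmem
      · intro hx
        by_cases hxz : x = z + 1
        · refine ⟨k, ?_⟩
          rw [hbseq' k, if_pos rfl, hxz]
        · have hxmem : x ∈ swap B z := by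
            by_cases hxz0 : x = z
            · exact Or.inl hxz0
            · exact Or.inr ⟨hx, hxz⟩
          rw [← hl, ← range_bseq] at hxmem
          obtain ⟨n, rfl⟩ := hxmem
          have hn : n ≠ k := by
            intro hc
            rw [hc, hk] at hx
            exact h0 hx
          refine ⟨n, ?_⟩
          rw [hbseq' n, if_neg hn]

lemma part_ext {l1 l2 : SeqPartition} (h : ∀ n, l1.f n = l2.f n) : l1 = l2 := by
  cases l1 with | mk f1 a1 e1 =>
  cases l2 with | mk f2 a2 e2 =>
  have hf : f1 = f2 := funext h
  subst hf
  rfl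

lemma strictAnti_range_unique {g1 g2 : ℕ → ℤ} (h1 : StrictAnti g1) (h2 : StrictAnti g2)
    (h : Set.range g1 = Set.range g2) : ∀ n, g1 n = g2 n := by
  intro n
  induction n using Nat.strong_induction_on with
  | _ n ih =>
    have key : ∀ (a b : ℕ → ℤ), StrictAnti a → StrictAnti b → Set.range a = Set.range b →
        (∀ m, m < n → a m = b m) → a n ≤ b n := by
      intro a b ha hb hr hih
      have hmem : a n ∈ Set.range b := by rw [← hr]; exact ⟨n, rfl⟩
      obtain ⟨m, hm⟩ := hmem
      rcases lt_or_ge m n with hlt | hge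
      · exfalso
        have hab : b m = a m := (hih m hlt).symm
        rw [hab] at hm
        exact absurd (ha.injective hm) (by omega)
      · calc a n = b m := hm.symm
          _ ≤ b n := hb.antitone hge
    have e1 := key g1 g2 h1 h2 h ih
    have e2 := key g2 g1 h2 h1 h.symm (fun m hm => (ih m hm).symm)
    omega

lemma beta_unique {r1 r2 : ℤ} {l1 l2 : SeqPartition} (h : beta r1 l1 = beta r2 l2) :
    r1 = r2 ∧ l1 = l2 := by
  have hr : r1 = r2 := by
    have h1 := chg_beta r1 l1
    rw [h, chg_beta] at h1
    omega
  subst hr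
  have hb := strictAnti_range_unique (bseq_strictAnti l1 r1) (bseq_strictAnti l2 r1)
    (by rw [range_bseq, range_bseq, h])
  refine ⟨rfl, part_ext fun n => ?_⟩
  have h2 := hb n
  unfold bseq at h2
  omega

lemma ofBeta_spec {B : Set ℤ} (hB : Quasi B) : beta (chg B) (ofBeta B) = B := by
  have hex : ∃ (l : SeqPartition) (r : ℤ), beta r l = B := exists_beta B hB
  rw [ofBeta, dif_pos hex]
  obtain ⟨r, hr⟩ := hex.choose_spec
  have hc : chg B = r := by rw [← hr, chg_beta]
  rw [hc, hr]

lemma ofBeta_beta (r : ℤ) (l : SeqPartition) : ofBeta (beta r l) = l := by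
  have h := ofBeta_spec (beta_quasi r l)
  rw [chg_beta] at h
  exact (beta_unique h).2

lemma size_ofBeta {B : Set ℤ} (hB : Quasi B) : size (ofBeta B) = SZ B := by
  conv_rhs => rw [← ofBeta_spec hB]
  rw [SZ_beta]

def runner (s : ℕ) (j : ℤ) (B : Set ℤ) : Set ℤ := {z | j + (s : ℤ) * z ∈ B}

def shiftS (c : ℤ) (A : Set ℤ) : Set ℤ := {x | x + c ∈ A}

lemma runner_quasi {s : ℕ} (hs : 0 < s) {B : Set ℤ} (hB : Quasi B) (j : ℤ) :
    Quasi (runner s j B) := by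
  obtain ⟨a, ha⟩ := hB.1
  obtain ⟨b, hb⟩ := hB.2
  have hs' : (0:ℤ) < (s:ℤ) := by exact_mod_cast hs
  constructor
  · refine ⟨(a - j) / (s:ℤ), fun z hz => ?_⟩
    apply ha
    have h1 : ((a - j) / (s:ℤ)) * (s:ℤ) ≤ a - j := Int.ediv_mul_le _ (by omega)
    have h3 : z * (s:ℤ) ≤ ((a - j) / (s:ℤ) - 1) * (s:ℤ) :=
      mul_le_mul_of_nonneg_right (by omega) hs'.le
    have h4 : ((a - j) / (s:ℤ) - 1) * (s:ℤ) = ((a - j) / (s:ℤ)) * (s:ℤ) - (s:ℤ) := by ring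
    have h5 : (s:ℤ) * z = z * (s:ℤ) := mul_comm _ _
    omega
  · refine ⟨(b - j) / (s:ℤ) + 1, fun z hz hmem => ?_⟩
    refine hb (j + (s:ℤ) * z) ?_ hmem
    have h1 : b - j < ((b - j) / (s:ℤ) + 1) * (s:ℤ) := Int.lt_ediv_add_one_mul_self _ hs'
    have h3 : ((b - j) / (s:ℤ) + 1) * (s:ℤ) ≤ z * (s:ℤ) :=
      mul_le_mul_of_nonneg_right hz hs'.le
    have h5 : (s:ℤ) * z = z * (s:ℤ) := mul_comm _ _
    omega

lemma runner_runner (r s : ℕ) (k j : ℤ) (B : Set ℤ) :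
    runner r k (runner s j B) = runner (s * r) (j + (s:ℤ) * k) B := by
  ext z
  simp only [runner, Set.mem_setOf_eq]
  constructor
  · intro h
    have he : j + (s:ℤ) * (k + (r:ℤ) * z) = j + (s:ℤ) * k + ((s * r : ℕ) : ℤ) * z := by
      push_cast
      ring
    rwa [he] at h
  · intro h
    have he : j + (s:ℤ) * (k + (r:ℤ) * z) = j + (s:ℤ) * k + ((s * r : ℕ) : ℤ) * z := by
      push_cast
      ring
    rwa [← he] at h

lemma runner_shiftS (r : ℕ) (k c : ℤ) (A : Set ℤ) :
    runner r k (shiftS c A) = runner r (k + c) A := by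
  ext z
  simp only [runner, shiftS, Set.mem_setOf_eq]
  constructor
  · intro h; rwa [show k + c + (r:ℤ) * z = k + (r:ℤ)*z + c by ring]
  · intro h; rwa [show k + c + (r:ℤ) * z = k + (r:ℤ)*z + c by ring] at h

lemma runner_add_mul (r : ℕ) (j m : ℤ) (A : Set ℤ) :
    runner r (j + (r:ℤ) * m) A = shiftS m (runner r j A) := by
  ext z
  simp only [runner, shiftS, Set.mem_setOf_eq]
  constructor
  · intro h; rwa [show j + (r:ℤ) * (z + m) = j + (r:ℤ)*m + (r:ℤ)*z by ring]
  · intro h; rwa [show j + (r:ℤ) * (z + m) = j + (r:ℤ)*m + (r:ℤ)*z by ring] at h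

lemma SZ_shiftS (m : ℤ) (A : Set ℤ) : SZ (shiftS m A) = SZ A := by
  have key : Pc (shiftS m A) (shiftS m A) 0
      = (fun p : ℤ × ℤ => (p.1 - m, p.2 - m)) '' (Pc A A 0) := by
    ext ⟨x, w⟩
    simp only [Pc, shiftS, Set.mem_setOf_eq, Set.mem_image, Prod.mk.injEq]
    constructor
    · rintro ⟨hx, hw, hlt⟩
      exact ⟨(x + m, w + m), ⟨hx, hw, by omega⟩, by ring, by ring⟩
    · rintro ⟨⟨u, v⟩, ⟨hu, hv, hlt⟩, h1, h2⟩
      refine ⟨?_, ?_, by omega⟩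
      · rw [show x + m = u by omega]; exact hu
      · rw [show w + m = v by omega]; exact hv
  rw [SZ, SZ, Dc, Dc, key, Set.ncard_image_of_injective]
  intro p q h
  simp only [Prod.mk.injEq] at h
  exact Prod.ext (by omega) (by omega)

lemma mem_iff_runner {s : ℕ} (B : Set ℤ) (x : ℤ) :
    x ∈ B ↔ x / (s:ℤ) ∈ runner s (x % (s:ℤ)) B := by
  unfold runner
  simp only [Set.mem_setOf_eq]
  rw [Int.emod_add_mul_ediv x (s:ℤ)]

lemma coreBeta_eq {s : ℕ} (hs : 0 < s) {B : Set ℤ} (hB : Quasi B) :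
    coreBeta s B = {x : ℤ | x / (s:ℤ) < chg (runner s (x % (s:ℤ)) B)} := by
  have hs' : (0:ℤ) < (s:ℤ) := by exact_mod_cast hs
  ext x
  set j := x % (s:ℤ) with hj
  set z := x / (s:ℤ) with hz
  have hx : j + (s:ℤ) * z = x := Int.emod_add_mul_ediv x (s:ℤ)
  have hR : Quasi (runner s j B) := runner_quasi hs hB j
  have hinj : Function.Injective (fun w : ℤ => j + (s:ℤ) * w) := by
    intro a b h
    simp only at h
    have := mul_left_cancel₀ (show (s:ℤ) ≠ 0 by omega) (by omega : (s:ℤ) * a = (s:ℤ) * b)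
    exact this
  have hmodj : ∀ y : ℤ, y ≡ x [ZMOD (s:ℤ)] ↔ y % (s:ℤ) = j := by
    intro y
    exact Iff.rfl
  have hgaps : {y : ℤ | y ∉ B ∧ y ≡ x [ZMOD (s:ℤ)] ∧ y < x}
      = (fun w => j + (s:ℤ) * w) '' ((runner s j B)ᶜ ∩ Set.Iio z) := by
    ext y
    simp only [Set.mem_setOf_eq, Set.mem_image, Set.mem_inter_iff, Set.mem_compl_iff,
      Set.mem_Iio, runner]
    constructor
    · rintro ⟨hy, hmod, hlt⟩
      have hym : y % (s:ℤ) = j := (hmodj y).1 hmod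
      have hye : j + (s:ℤ) * (y / (s:ℤ)) = y := by
        rw [← hym]; exact Int.emod_add_mul_ediv y (s:ℤ)
      refine ⟨y / (s:ℤ), ⟨?_, ?_⟩, hye⟩
      · rw [hye]; exact hy
      · have : (s:ℤ) * (y / (s:ℤ)) < (s:ℤ) * z := by omega
        exact lt_of_mul_lt_mul_left this hs'.le
    · rintro ⟨w, ⟨hw, hwz⟩, rfl⟩
      refine ⟨hw, ?_, ?_⟩
      · show (j + (s:ℤ) * w) % (s:ℤ) = x % (s:ℤ)
        rw [Int.add_mul_emod_self_left, hj, Int.emod_emod_of_dvd _ dvd_rfl]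
      · have : (s:ℤ) * w < (s:ℤ) * z := by
          exact mul_lt_mul_of_pos_left hwz hs'
        omega
  have hbeads : {b : ℤ | b ∈ B ∧ b ≡ x [ZMOD (s:ℤ)] ∧ x ≤ b}
      = (fun w => j + (s:ℤ) * w) '' ((runner s j B) ∩ Set.Ici z) := by
    ext y
    simp only [Set.mem_setOf_eq, Set.mem_image, Set.mem_inter_iff, Set.mem_Ici, runner]
    constructor
    · rintro ⟨hy, hmod, hle⟩
      have hym : y % (s:ℤ) = j := (hmodj y).1 hmod
      have hye : j + (s:ℤ) * (y / (s:ℤ)) = y := by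
        rw [← hym]; exact Int.emod_add_mul_ediv y (s:ℤ)
      refine ⟨y / (s:ℤ), ⟨?_, ?_⟩, hye⟩
      · rw [hye]; exact hy
      · have : (s:ℤ) * z ≤ (s:ℤ) * (y / (s:ℤ)) := by omega
        exact le_of_mul_le_mul_left this hs'
    · rintro ⟨w, ⟨hw, hwz⟩, rfl⟩
      refine ⟨hw, ?_, ?_⟩
      · show (j + (s:ℤ) * w) % (s:ℤ) = x % (s:ℤ)
        rw [Int.add_mul_emod_self_left, hj, Int.emod_emod_of_dvd _ dvd_rfl]
      · have : (s:ℤ) * z ≤ (s:ℤ) * w := mul_le_mul_of_nonneg_left hwz hs'.le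
        omega
  show _ ↔ _
  rw [SeqPartition.coreBeta, Set.mem_setOf_eq, Set.mem_setOf_eq, hgaps, hbeads,
    Set.ncard_image_of_injective _ hinj, Set.ncard_image_of_injective _ hinj]
  have e1 : ((runner s j B)ᶜ ∩ Set.Iio z).ncard = Gc (runner s j B) z := rfl
  have e2 : ((runner s j B) ∩ Set.Ici z).ncard = Hc (runner s j B) z := rfl
  rw [e1, e2]
  rw [show x % (s:ℤ) = j from hj.symm, show x / (s:ℤ) = z from hz.symm]
  have := chg_at hR z
  omega

lemma runner_coreBeta {s : ℕ} (hs : 0 < s) {B : Set ℤ} (hB : Quasi B) {j : ℤ}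
    (h0 : 0 ≤ j) (h1 : j < (s:ℤ)) :
    runner s j (coreBeta s B) = Set.Iio (chg (runner s j B)) := by
  rw [coreBeta_eq hs hB]
  ext z
  simp only [runner, Set.mem_setOf_eq, Set.mem_Iio]
  have e1 : (j + (s:ℤ) * z) % (s:ℤ) = j := by
    rw [Int.add_mul_emod_self_left, Int.emod_eq_of_lt h0 h1]
  have e2 : (j + (s:ℤ) * z) / (s:ℤ) = z := by
    rw [Int.add_mul_ediv_left _ _ (by omega : (s:ℤ) ≠ 0), Int.ediv_eq_zero_of_lt h0 h1]
    omega
  rw [e1, e2]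

lemma coreBeta_quasi {s : ℕ} (hs : 0 < s) {B : Set ℤ} (hB : Quasi B) :
    Quasi (coreBeta s B) := by
  rw [coreBeta_eq hs hB]
  have hs' : (0:ℤ) < (s:ℤ) := by exact_mod_cast hs
  have hTne : ((Finset.Ico (0:ℤ) (s:ℤ)).image (fun j => chg (runner s j B))).Nonempty := by
    apply Finset.image_nonempty.2
    rw [Finset.nonempty_Ico]
    omega
  set T := (Finset.Ico (0:ℤ) (s:ℤ)).image (fun j => chg (runner s j B)) with hT
  set m := T.min' hTne with hm
  set M := T.max' hTne with hM
  have hmemT : ∀ x : ℤ, chg (runner s (x % (s:ℤ)) B) ∈ T := by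
    intro x
    apply Finset.mem_image_of_mem
    simp only [Finset.mem_Ico]
    exact ⟨Int.emod_nonneg x (by omega), Int.emod_lt_of_pos x hs'⟩
  constructor
  · refine ⟨(s:ℤ) * (m - 1), fun x hx => ?_⟩
    simp only [Set.mem_setOf_eq]
    have h2 : m ≤ chg (runner s (x % (s:ℤ)) B) := Finset.min'_le T _ (hmemT x)
    have h3 : x / (s:ℤ) < m := by
      rw [Int.ediv_lt_iff_lt_mul hs']
      have he : (s:ℤ) * (m - 1) = m * (s:ℤ) - (s:ℤ) := by ring
      omega
    omega
  · refine ⟨(s:ℤ) * (M + 1), fun x hx => ?_⟩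
    simp only [Set.mem_setOf_eq]
    intro hc
    have h2 : chg (runner s (x % (s:ℤ)) B) ≤ M := Finset.le_max' T _ (hmemT x)
    have h3 : M + 1 ≤ x / (s:ℤ) := by
      rw [Int.le_ediv_iff_mul_le hs']
      have he : (M + 1) * (s:ℤ) = (s:ℤ) * (M + 1) := by ring
      omega
    omega

lemma SZ_Iio (c : ℤ) : SZ (Set.Iio c) = 0 := by
  rw [SZ, Dc]
  have he : Pc (Set.Iio c) (Set.Iio c) 0 = ∅ := by
    ext ⟨x, w⟩
    simp only [Pc, Set.mem_setOf_eq, Set.mem_Iio, Set.mem_empty_iff_false]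
    exact iff_of_false (fun ⟨h1, h2, h3⟩ => h2 (by omega)) not_false
  rw [he, Set.ncard_empty]

lemma cmp_lemma {s : ℕ} (hs : 0 < s) {j j' : ℤ} (h0 : 0 ≤ j) (h1 : j < (s:ℤ)) (h0' : 0 ≤ j')
    (h1' : j' < (s:ℤ)) (z w : ℤ) :
    j' + (s:ℤ) * w < j + (s:ℤ) * z ↔ w < z + (if j' < j then 1 else 0) := by
  have hs' : (0:ℤ) < (s:ℤ) := by exact_mod_cast hs
  split_ifs with hjj
  · constructor
    · intro h
      by_contra hc
      push_neg at hc
      have h2 : (s:ℤ) * (z + 1) ≤ (s:ℤ) * w := mul_le_mul_of_nonneg_left (by omega) hs'.le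
      have h3 : (s:ℤ) * (z + 1) = (s:ℤ) * z + (s:ℤ) := by ring
      omega
    · intro h
      have h2 : (s:ℤ) * w ≤ (s:ℤ) * z := mul_le_mul_of_nonneg_left (by omega) hs'.le
      omega
  · push_neg at hjj
    constructor
    · intro h
      by_contra hc
      push_neg at hc
      have h2 : (s:ℤ) * z ≤ (s:ℤ) * w := mul_le_mul_of_nonneg_left (by omega) hs'.le
      omega
    · intro h
      have h2 : (s:ℤ) * (w + 1) ≤ (s:ℤ) * z := mul_le_mul_of_nonneg_left (by omega) hs'.le
      have h3 : (s:ℤ) * (w + 1) = (s:ℤ) * w + (s:ℤ) := by ring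
      omega

lemma class_card {s : ℕ} (hs : 0 < s) {A : Set ℤ} (hA : Quasi A) {j j' : ℤ}
    (hj0 : 0 ≤ j) (hj1 : j < (s:ℤ)) (hj0' : 0 ≤ j') (hj1' : j' < (s:ℤ)) :
    {p ∈ Pc A A 0 | p.1 % (s:ℤ) = j ∧ p.2 % (s:ℤ) = j'}.ncard
      = Dc (runner s j A) (runner s j' A) (if j' < j then 1 else 0) := by
  have hs' : (0:ℤ) < (s:ℤ) := by exact_mod_cast hs
  have hinj : Function.Injective
      (fun q : ℤ × ℤ => (j + (s:ℤ) * q.1, j' + (s:ℤ) * q.2)) := by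
    rintro ⟨a1, a2⟩ ⟨b1, b2⟩ h
    simp only [Prod.mk.injEq] at h
    have e1 : a1 = b1 := mul_left_cancel₀ (show (s:ℤ) ≠ 0 by omega) (by omega)
    have e2 : a2 = b2 := mul_left_cancel₀ (show (s:ℤ) ≠ 0 by omega) (by omega)
    simp [e1, e2]
  have himg : {p ∈ Pc A A 0 | p.1 % (s:ℤ) = j ∧ p.2 % (s:ℤ) = j'}
      = (fun q : ℤ × ℤ => (j + (s:ℤ) * q.1, j' + (s:ℤ) * q.2))
          '' (Pc (runner s j A) (runner s j' A) (if j' < j then 1 else 0)) := by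
    ext ⟨x, y⟩
    simp only [Set.mem_setOf_eq, Set.mem_image, Pc, runner, Prod.mk.injEq]
    constructor
    · rintro ⟨⟨hx, hy, hlt⟩, hxm, hym⟩
      have hxe : j + (s:ℤ) * (x / (s:ℤ)) = x := by
        rw [← hxm]; exact Int.emod_add_mul_ediv x (s:ℤ)
      have hye : j' + (s:ℤ) * (y / (s:ℤ)) = y := by
        rw [← hym]; exact Int.emod_add_mul_ediv y (s:ℤ)
      refine ⟨(x / (s:ℤ), y / (s:ℤ)), ⟨?_, ?_, ?_⟩, hxe, hye⟩
      · show j + (s:ℤ) * (x / (s:ℤ)) ∈ A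
        rw [hxe]; exact hx
      · show j' + (s:ℤ) * (y / (s:ℤ)) ∉ A
        rw [hye]; exact hy
      · apply (cmp_lemma hs hj0 hj1 hj0' hj1' (x / (s:ℤ)) (y / (s:ℤ))).1
        omega
    · rintro ⟨⟨zx, zy⟩, ⟨hz1, hz2, hz3⟩, h1, h2⟩
      dsimp only at hz1 hz2 hz3 h1 h2
      have hcmp := (cmp_lemma hs hj0 hj1 hj0' hj1' zx zy).2 hz3
      refine ⟨⟨?_, ?_, ?_⟩, ?_, ?_⟩
      · rw [← h1]; exact hz1
      · rw [← h2]; exact hz2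
      · omega
      · rw [← h1, Int.add_mul_emod_self_left, Int.emod_eq_of_lt hj0 hj1]
      · rw [← h2, Int.add_mul_emod_self_left, Int.emod_eq_of_lt hj0' hj1']
  rw [himg, Set.ncard_image_of_injective _ hinj, Dc]

lemma SZ_decomp {s : ℕ} (hs : 0 < s) {A : Set ℤ} (hA : Quasi A) :
    (SZ A : ℤ) = ∑ q ∈ Finset.Ico (0:ℤ) (s:ℤ) ×ˢ Finset.Ico (0:ℤ) (s:ℤ),
      (Dc (runner s q.1 A) (runner s q.2 A) (if q.2 < q.1 then 1 else 0) : ℤ) := by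
  classical
  have hs' : (0:ℤ) < (s:ℤ) := by exact_mod_cast hs
  have hfin := Pc_finite hA hA 0
  have hcard := Finset.card_eq_sum_card_fiberwise
    (f := fun p : ℤ × ℤ => (p.1 % (s:ℤ), p.2 % (s:ℤ)))
    (s := hfin.toFinset) (t := Finset.Ico (0:ℤ) (s:ℤ) ×ˢ Finset.Ico (0:ℤ) (s:ℤ))
    (fun p _ => by
      simp only [Finset.mem_coe, Finset.mem_product, Finset.mem_Ico]
      exact ⟨⟨Int.emod_nonneg _ (by omega), Int.emod_lt_of_pos _ hs'⟩,
        ⟨Int.emod_nonneg _ (by omega), Int.emod_lt_of_pos _ hs'⟩⟩)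
  have h1 : SZ A = hfin.toFinset.card := by
    rw [SZ, Dc, Set.ncard_eq_toFinset_card _ hfin]
  have key : ∀ q ∈ Finset.Ico (0:ℤ) (s:ℤ) ×ˢ Finset.Ico (0:ℤ) (s:ℤ),
      (hfin.toFinset.filter
          (fun p => (p.1 % (s:ℤ), p.2 % (s:ℤ)) = q)).card
        = Dc (runner s q.1 A) (runner s q.2 A) (if q.2 < q.1 then 1 else 0) := by
    intro q hq
    obtain ⟨q1, q2⟩ := q
    simp only [Finset.mem_product, Finset.mem_Ico] at hq
    rw [← class_card hs hA hq.1.1 hq.1.2 hq.2.1 hq.2.2, ← Set.ncard_coe_finset]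
    congr 1
    ext ⟨x, y⟩
    simp only [Finset.coe_filter, Set.mem_setOf_eq, Set.Finite.mem_toFinset, Prod.mk.injEq]
    try tauto
  rw [h1, hcard]
  push_cast
  apply Finset.sum_congr rfl
  intro q hq
  rw [key q hq]

lemma sum_pair_split (T : Finset ℤ) (g : ℤ × ℤ → ℤ) (a : ℤ → ℤ)
    (hdiag : ∀ j ∈ T, g (j, j) = a j)
    (hpair : ∀ u ∈ T, ∀ v ∈ T, u ≠ v → g (u, v) + g (v, u) = a u + a v) :
    ∑ q ∈ T ×ˢ T, g q = (T.card : ℤ) * ∑ j ∈ T, a j := by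
  classical
  have hsplit := Finset.sum_filter_add_sum_filter_not (T ×ˢ T) (fun q => q.1 = q.2) g
  have hdiag' : ∑ q ∈ (T ×ˢ T).filter (fun q => q.1 = q.2), g q = ∑ j ∈ T, a j := by
    refine Finset.sum_nbij' (i := fun q : ℤ × ℤ => q.1) (j := fun j : ℤ => (j, j))
      ?_ ?_ ?_ ?_ ?_
    · rintro ⟨u, v⟩ hq
      simp only [Finset.mem_filter, Finset.mem_product] at hq
      exact hq.1.1
    · intro j hj
      simp only [Finset.mem_filter, Finset.mem_product]
      refine ⟨⟨hj, hj⟩, ?_⟩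
      simp
    · rintro ⟨u, v⟩ hq
      simp only [Finset.mem_filter, Finset.mem_product] at hq
      simp only [hq.2]
    · intro j hj
      rfl
    · rintro ⟨u, v⟩ hq
      simp only [Finset.mem_filter, Finset.mem_product] at hq
      obtain ⟨⟨hu, hv⟩, he⟩ := hq
      show g (u, v) = a u
      rw [show v = u from he.symm]
      exact hdiag u hu
  have hswapS : ∀ (F : ℤ × ℤ → ℤ), ∑ q ∈ (T ×ˢ T).filter (fun q => ¬ q.1 = q.2), F q
      = ∑ q ∈ (T ×ˢ T).filter (fun q => ¬ q.1 = q.2), F q.swap := by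
    intro F
    refine Finset.sum_nbij' (i := Prod.swap) (j := Prod.swap) ?_ ?_ ?_ ?_ ?_
    · rintro ⟨u, v⟩ hq
      simp only [Finset.mem_filter, Finset.mem_product, Prod.swap_prod_mk] at hq ⊢
      exact ⟨⟨hq.1.2, hq.1.1⟩, fun hc => hq.2 hc.symm⟩
    · rintro ⟨u, v⟩ hq
      simp only [Finset.mem_filter, Finset.mem_product, Prod.swap_prod_mk] at hq ⊢
      exact ⟨⟨hq.1.2, hq.1.1⟩, fun hc => hq.2 hc.symm⟩
    · rintro ⟨u, v⟩ _
      rfl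
    · rintro ⟨u, v⟩ _
      rfl
    · rintro ⟨u, v⟩ _
      rfl
  have hoff : ∑ q ∈ (T ×ˢ T).filter (fun q => ¬ q.1 = q.2), g q
      = ∑ q ∈ (T ×ˢ T).filter (fun q => ¬ q.1 = q.2), a q.1 := by
    have h1 := hswapS g
    have h2 := hswapS (fun q => a q.1)
    have h3 : ∑ q ∈ (T ×ˢ T).filter (fun q => ¬ q.1 = q.2), (g q + g q.swap)
        = ∑ q ∈ (T ×ˢ T).filter (fun q => ¬ q.1 = q.2), (a q.1 + a q.2) := by
      apply Finset.sum_congr rfl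
      rintro ⟨u, v⟩ hq
      simp only [Finset.mem_filter, Finset.mem_product] at hq
      exact hpair u hq.1.1 v hq.1.2 hq.2
    rw [Finset.sum_add_distrib, Finset.sum_add_distrib] at h3
    have h2' : ∑ q ∈ (T ×ˢ T).filter (fun q => ¬ q.1 = q.2), a q.1
        = ∑ q ∈ (T ×ˢ T).filter (fun q => ¬ q.1 = q.2), a q.2 := h2
    omega
  have hcnt : ∑ q ∈ (T ×ˢ T).filter (fun q => ¬ q.1 = q.2), a q.1
      = ((T.card : ℤ) - 1) * ∑ j ∈ T, a j := by
    rw [Finset.sum_filter, Finset.sum_product]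
    have inner : ∀ j ∈ T, (∑ v ∈ T, if ¬ (j, v).1 = (j, v).2 then a (j, v).1 else 0)
        = (T.card : ℤ) * a j - a j := by
      intro j hj
      have e1 : ∀ v ∈ T, (if ¬ (j, v).1 = (j, v).2 then a (j, v).1 else 0)
          = a j - (if j = v then a v else 0) := by
        intro v _
        show (if ¬ j = v then a j else 0) = a j - (if j = v then a v else 0)
        by_cases h : j = v
        · rw [if_neg (by simpa using h), if_pos h, ← h]
          ring
        · rw [if_pos h, if_neg h]
          ring
      rw [Finset.sum_congr rfl e1, Finset.sum_sub_distrib, Finset.sum_const,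
        Finset.sum_ite_eq T j (fun v => a v), if_pos hj, nsmul_eq_mul]
    rw [Finset.sum_congr rfl inner, Finset.sum_sub_distrib, ← Finset.mul_sum]
    ring
  have hring : ((T.card : ℤ) - 1) * (∑ j ∈ T, a j) + ∑ j ∈ T, a j
      = (T.card : ℤ) * ∑ j ∈ T, a j := by ring
  linarith

lemma master {s : ℕ} (hs : 0 < s) {B : Set ℤ} (hB : Quasi B) :
    (SZ B : ℤ) = (s : ℤ) * (∑ j ∈ Finset.Ico (0:ℤ) (s:ℤ), (SZ (runner s j B) : ℤ))
      + (SZ (coreBeta s B) : ℤ) := by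
  classical
  have hs' : (0:ℤ) < (s:ℤ) := by exact_mod_cast hs
  have hCq : Quasi (coreBeta s B) := coreBeta_quasi hs hB
  have d1 := SZ_decomp hs hB
  have d2' : (SZ (coreBeta s B) : ℤ)
      = ∑ q ∈ Finset.Ico (0:ℤ) (s:ℤ) ×ˢ Finset.Ico (0:ℤ) (s:ℤ),
        (Dc (Set.Iio (chg (runner s q.1 B))) (Set.Iio (chg (runner s q.2 B)))
          (if q.2 < q.1 then 1 else 0) : ℤ) := by
    rw [SZ_decomp hs hCq]
    apply Finset.sum_congr rfl
    intro q hq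
    simp only [Finset.mem_product, Finset.mem_Ico] at hq
    rw [runner_coreBeta hs hB hq.1.1 hq.1.2, runner_coreBeta hs hB hq.2.1 hq.2.2]
  have mainlem : ∀ u v : ℤ, v < u →
      ((Dc (runner s u B) (runner s v B) 1 : ℤ)
          - (Dc (Set.Iio (chg (runner s u B))) (Set.Iio (chg (runner s v B))) 1 : ℤ))
        + ((Dc (runner s v B) (runner s u B) 0 : ℤ)
          - (Dc (Set.Iio (chg (runner s v B))) (Set.Iio (chg (runner s u B))) 0 : ℤ))
      = (SZ (runner s u B) : ℤ) + (SZ (runner s v B) : ℤ) := by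
    intro u v huv
    have hU : Quasi (runner s u B) := runner_quasi hs hB u
    have hV : Quasi (runner s v B) := runner_quasi hs hB v
    have hFq := Fq_inv hU hV
    unfold Fq at hFq
    rw [SZ_Iio, SZ_Iio] at hFq
    omega
  have key := sum_pair_split (Finset.Ico (0:ℤ) (s:ℤ))
    (fun q => (Dc (runner s q.1 B) (runner s q.2 B) (if q.2 < q.1 then 1 else 0) : ℤ)
      - (Dc (Set.Iio (chg (runner s q.1 B))) (Set.Iio (chg (runner s q.2 B)))
          (if q.2 < q.1 then 1 else 0) : ℤ))
    (fun j => (SZ (runner s j B) : ℤ))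
    (by
      intro j hj
      show (Dc (runner s j B) (runner s j B) (if j < j then 1 else 0) : ℤ)
          - (Dc (Set.Iio (chg (runner s j B))) (Set.Iio (chg (runner s j B)))
            (if j < j then 1 else 0) : ℤ) = (SZ (runner s j B) : ℤ)
      rw [if_neg (lt_irrefl j)]
      have e2 : Dc (Set.Iio (chg (runner s j B))) (Set.Iio (chg (runner s j B))) 0 = 0 :=
        SZ_Iio _
      have e1 : Dc (runner s j B) (runner s j B) 0 = SZ (runner s j B) := rfl
      rw [e1, e2]
      omega)
    (by
      intro u hu v hv hne
      show ((Dc (runner s u B) (runner s v B) (if v < u then 1 else 0) : ℤ)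
          - (Dc (Set.Iio (chg (runner s u B))) (Set.Iio (chg (runner s v B)))
            (if v < u then 1 else 0) : ℤ))
        + ((Dc (runner s v B) (runner s u B) (if u < v then 1 else 0) : ℤ)
          - (Dc (Set.Iio (chg (runner s v B))) (Set.Iio (chg (runner s u B)))
            (if u < v then 1 else 0) : ℤ))
        = (SZ (runner s u B) : ℤ) + (SZ (runner s v B) : ℤ)
      rcases lt_or_gt_of_ne hne with h | h
      · rw [if_neg (by omega : ¬ v < u), if_pos h]
        have := mainlem v u h
        omega
      · rw [if_pos h, if_neg (by omega : ¬ u < v)]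
        have := mainlem u v h
        omega)
  rw [Finset.sum_sub_distrib, ← d1, ← d2'] at key
  have hcard : (((Finset.Ico (0:ℤ) (s:ℤ)).card : ℤ)) = (s:ℤ) := by
    rw [Int.card_Ico]
    simp
  rw [hcard] at key
  linarith

lemma sum_Ico_int {M : Type*} [AddCommMonoid M] (s : ℕ) (F : ℤ → M) :
    ∑ j ∈ Finset.Ico (0:ℤ) (s:ℤ), F j = ∑ i ∈ Finset.range s, F (i : ℤ) := by
  refine Finset.sum_nbij' (i := fun j : ℤ => j.toNat) (j := fun i : ℕ => (i : ℤ))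
    ?_ ?_ ?_ ?_ ?_
  · intro j hj
    simp only [Finset.mem_Ico] at hj
    simp only [Finset.mem_range]
    try dsimp only
    omega
  · intro i hi
    simp only [Finset.mem_range] at hi
    simp only [Finset.mem_Ico]
    try dsimp only
    omega
  · intro j hj
    simp only [Finset.mem_Ico] at hj
    try dsimp only
    omega
  · intro i hi
    simp
  · intro j hj
    simp only [Finset.mem_Ico] at hj
    try dsimp only
    congr 1
    omega

lemma size_master (t : ℕ) (ht : 0 < t) (l : SeqPartition) :
    size l = t * (∑ j ∈ Finset.Ico (0:ℤ) (t:ℤ), SZ (runner t j (beta 0 l)))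
      + size (core t l) := by
  have hq : Quasi (beta 0 l) := beta_quasi 0 l
  have hCq := coreBeta_quasi ht hq
  have h1 : size l = SZ (beta 0 l) := (SZ_beta 0 l).symm
  have h2 : size (core t l) = SZ (coreBeta t (beta 0 l)) := by
    rw [SeqPartition.core]
    exact size_ofBeta hCq
  have h3 := master ht hq
  have h4 : SZ (beta 0 l)
      = t * (∑ j ∈ Finset.Ico (0:ℤ) (t:ℤ), SZ (runner t j (beta 0 l)))
        + SZ (coreBeta t (beta 0 l)) := by
    have hcast : (∑ j ∈ Finset.Ico (0:ℤ) (t:ℤ), (SZ (runner t j (beta 0 l)) : ℤ))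
        = ((∑ j ∈ Finset.Ico (0:ℤ) (t:ℤ), SZ (runner t j (beta 0 l)) : ℕ) : ℤ) := by
      push_cast
      rfl
    rw [hcast] at h3
    exact_mod_cast h3
  omega

lemma wt_eq (t : ℕ) (ht : 0 < t) (l : SeqPartition) :
    wt t l = ∑ j ∈ Finset.Ico (0:ℤ) (t:ℤ), SZ (runner t j (beta 0 l)) := by
  have h := size_master t ht l
  rw [SeqPartition.wt]
  rw [show size l - size (core t l)
      = t * ∑ j ∈ Finset.Ico (0:ℤ) (t:ℤ), SZ (runner t j (beta 0 l)) by omega]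
  exact Nat.mul_div_cancel_left _ ht

lemma quot_runner (s : ℕ) (hs : 0 < s) (l : SeqPartition) (i : ℕ) (hi : i < s) :
    quot s l ((i : ℕ) : ZMod s) = ofBeta (runner s (i : ℤ) (beta 0 l)) := by
  haveI : NeZero s := ⟨hs.ne'⟩
  rw [SeqPartition.quot]
  congr 1
  ext z
  simp only [runner, Set.mem_setOf_eq]
  rw [ZMod.val_cast_of_lt hi]

lemma beta_zero_shift (c : ℤ) (m : SeqPartition) : beta 0 m = shiftS c (beta c m) := by
  ext x
  simp only [beta, shiftS, Set.mem_setOf_eq]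
  constructor
  · rintro ⟨n, rfl⟩
    exact ⟨n, by ring⟩
  · rintro ⟨n, hn⟩
    exact ⟨n, by omega⟩

lemma wt_quot (r s : ℕ) (hr : 0 < r) (hs : 0 < s) (l : SeqPartition) (i : ℕ) (hi : i < s) :
    wt r (quot s l (i : ZMod s))
      = ∑ k ∈ Finset.Ico (0:ℤ) (r:ℤ),
          SZ (runner (s * r) ((i:ℤ) + (s:ℤ) * k) (beta 0 l)) := by
  have hr' : (0:ℤ) < (r:ℤ) := by exact_mod_cast hr
  have hqB : Quasi (beta 0 l) := beta_quasi 0 l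
  have hqA : Quasi (runner s (i:ℤ) (beta 0 l)) := runner_quasi hs hqB _
  rw [quot_runner s hs l i hi, wt_eq r hr]
  set A := runner s (i:ℤ) (beta 0 l) with hA
  have hof := ofBeta_spec hqA
  have hshift : beta 0 (ofBeta A) = shiftS (chg A) A := by
    rw [beta_zero_shift (chg A) (ofBeta A), hof]
  rw [hshift]
  have hstep : ∀ k : ℤ, SZ (runner r k (shiftS (chg A) A))
      = SZ (runner (s * r) ((i:ℤ) + (s:ℤ) * ((k + chg A) % (r:ℤ))) (beta 0 l)) := by
    intro k
    rw [runner_shiftS]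
    have h5 : runner r (k + chg A) A
        = shiftS ((k + chg A) / (r:ℤ)) (runner r ((k + chg A) % (r:ℤ)) A) := by
      rw [← runner_add_mul,
        show (k + chg A) % (r:ℤ) + (r:ℤ) * ((k + chg A) / (r:ℤ)) = k + chg A
          from Int.emod_add_mul_ediv _ _]
    rw [h5, SZ_shiftS, hA, runner_runner]
  rw [Finset.sum_congr rfl (fun k _ => hstep k)]
  refine Finset.sum_nbij' (i := fun k : ℤ => (k + chg A) % (r:ℤ))
    (j := fun k : ℤ => (k - chg A) % (r:ℤ)) ?_ ?_ ?_ ?_ ?_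
  · intro k hk
    simp only [Finset.mem_Ico]
    try dsimp only
    exact ⟨Int.emod_nonneg _ (by omega), Int.emod_lt_of_pos _ hr'⟩
  · intro k hk
    simp only [Finset.mem_Ico]
    try dsimp only
    exact ⟨Int.emod_nonneg _ (by omega), Int.emod_lt_of_pos _ hr'⟩
  · intro k hk
    simp only [Finset.mem_Ico] at hk
    try dsimp only
    have h6 : ((k + chg A) % (r:ℤ) - chg A) % (r:ℤ) = (k + chg A - chg A) % (r:ℤ) := by
      conv_rhs => rw [Int.sub_emod]
      conv_lhs => rw [Int.sub_emod, Int.emod_emod_of_dvd _ dvd_rfl]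
    rw [h6, show k + chg A - chg A = k by ring, Int.emod_eq_of_lt hk.1 hk.2]
  · intro k hk
    simp only [Finset.mem_Ico] at hk
    try dsimp only
    have h6 : ((k - chg A) % (r:ℤ) + chg A) % (r:ℤ) = (k - chg A + chg A) % (r:ℤ) := by
      conv_rhs => rw [Int.add_emod]
      conv_lhs => rw [Int.add_emod, Int.emod_emod_of_dvd _ dvd_rfl]
    rw [h6, show k - chg A + chg A = k by ring, Int.emod_eq_of_lt hk.1 hk.2]
  · intro k hk
    rfl

lemma iscore_iff (t : ℕ) (ht : 0 < t) (m : SeqPartition) : IsCore t m ↔ wt t m = 0 := by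
  constructor
  · intro h
    rw [SeqPartition.IsCore] at h
    rw [SeqPartition.wt, h, Nat.sub_self, Nat.zero_div]
  · intro h
    rw [wt_eq t ht m] at h
    have hqB : Quasi (beta 0 m) := beta_quasi 0 m
    have hzero : ∀ j, 0 ≤ j → j < (t:ℤ) → SZ (runner t j (beta 0 m)) = 0 := by
      intro j h0 h1
      have := Finset.sum_eq_zero_iff.1 h j (by simp only [Finset.mem_Ico]; exact ⟨h0, h1⟩)
      exact this
    have hCB : coreBeta t (beta 0 m) = beta 0 m := by
      rw [coreBeta_eq ht hqB]
      ext x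
      simp only [Set.mem_setOf_eq]
      have ht' : (0:ℤ) < (t:ℤ) := by exact_mod_cast ht
      have hrq : runner t (x % (t:ℤ)) (beta 0 m)
          = Set.Iio (chg (runner t (x % (t:ℤ)) (beta 0 m))) :=
        eq_Iio_of_SZ_zero (runner_quasi ht hqB _)
          (hzero _ (Int.emod_nonneg _ (by omega)) (Int.emod_lt_of_pos _ ht'))
      rw [mem_iff_runner (beta 0 m) x, hrq]
      simp only [Set.mem_Iio]
      rw [chg_Iio]
    rw [SeqPartition.IsCore, SeqPartition.core, hCB, ofBeta_beta]
end PfAux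

open SeqPartition in
/-- `wt_{rs}(λ) = Σ_{j ∈ ℤ/sℤ} wt_r(λ^(j))`; in particular `λ` is an `rs`-core iff
every component of its `s`-quotient is an `r`-core. -/
theorem wt_mul_eq_sum_quot (r s : ℕ) (hr : 0 < r) (hs : 0 < s) (l : SeqPartition) :
    wt (r * s) l = ∑ i ∈ Finset.range s, wt r (quot s l (i : ZMod s)) ∧
    (IsCore (r * s) l ↔ ∀ j : ZMod s, IsCore r (quot s l j)) := by
  haveI : NeZero s := ⟨hs.ne'⟩
  have hrs : 0 < r * s := Nat.mul_pos hr hs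
  have hs' : (0:ℤ) < (s:ℤ) := by exact_mod_cast hs
  have hr' : (0:ℤ) < (r:ℤ) := by exact_mod_cast hr
  have hcast : ((s * r : ℕ) : ℤ) = (s:ℤ) * (r:ℤ) := by push_cast; ring
  have p1 : wt (r * s) l = ∑ i ∈ Finset.range s, wt r (quot s l (i : ZMod s)) := by
    rw [PfAux.wt_eq (r * s) hrs l]
    rw [Finset.sum_congr rfl
      (fun i hi => PfAux.wt_quot r s hr hs l i (Finset.mem_range.1 hi))]
    rw [show r * s = s * r from Nat.mul_comm r s]
    rw [← PfAux.sum_Ico_int s (fun j => ∑ k ∈ Finset.Ico (0:ℤ) (r:ℤ),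
      PfAux.SZ (PfAux.runner (s * r) (j + (s:ℤ) * k) (beta 0 l)))]
    rw [← Finset.sum_product' (s := Finset.Ico (0:ℤ) (s:ℤ)) (t := Finset.Ico (0:ℤ) (r:ℤ))
      (f := fun j k => PfAux.SZ (PfAux.runner (s * r) (j + (s:ℤ) * k) (beta 0 l)))]
    refine Finset.sum_nbij' (i := fun m : ℤ => (m % (s:ℤ), m / (s:ℤ)))
      (j := fun q : ℤ × ℤ => q.1 + (s:ℤ) * q.2) ?_ ?_ ?_ ?_ ?_
    · intro m hm
      simp only [Finset.mem_Ico] at hm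
      simp only [Finset.mem_product, Finset.mem_Ico]
      try dsimp only
      rw [hcast] at hm
      refine ⟨⟨Int.emod_nonneg _ (by omega), Int.emod_lt_of_pos _ hs'⟩,
        ⟨Int.ediv_nonneg hm.1 hs'.le, ?_⟩⟩
      rw [Int.ediv_lt_iff_lt_mul hs']
      have : (r:ℤ) * (s:ℤ) = (s:ℤ) * (r:ℤ) := mul_comm _ _
      omega
    · rintro ⟨q1, q2⟩ hq
      simp only [Finset.mem_product, Finset.mem_Ico] at hq
      simp only [Finset.mem_Ico]
      try dsimp only
      obtain ⟨⟨h1, h2⟩, h3, h4⟩ := hq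
      have h5 : (s:ℤ) * q2 ≤ (s:ℤ) * ((r:ℤ) - 1) := mul_le_mul_of_nonneg_left (by omega) hs'.le
      have h6 : (s:ℤ) * ((r:ℤ) - 1) = (s:ℤ) * (r:ℤ) - (s:ℤ) := by ring
      have h7 : 0 ≤ (s:ℤ) * q2 := mul_nonneg hs'.le h3
      rw [hcast]
      omega
    · intro m hm
      simp only [Finset.mem_Ico] at hm
      try dsimp only
      exact Int.emod_add_mul_ediv m (s:ℤ)
    · rintro ⟨q1, q2⟩ hq
      simp only [Finset.mem_product, Finset.mem_Ico] at hq
      obtain ⟨⟨h1, h2⟩, h3, h4⟩ := hq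
      try dsimp only
      have e1 : (q1 + (s:ℤ) * q2) % (s:ℤ) = q1 := by
        rw [Int.add_mul_emod_self_left, Int.emod_eq_of_lt h1 h2]
      have e2 : (q1 + (s:ℤ) * q2) / (s:ℤ) = q2 := by
        rw [Int.add_mul_ediv_left _ _ (by omega : (s:ℤ) ≠ 0),
          Int.ediv_eq_zero_of_lt h1 h2]
        omega
      rw [e1, e2]
    · intro m hm
      try dsimp only
      rw [Int.emod_add_mul_ediv m (s:ℤ)]
  refine ⟨p1, ?_⟩
  rw [PfAux.iscore_iff (r * s) hrs l, p1]
  constructor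
  · intro h j
    rw [PfAux.iscore_iff r hr]
    have hj : ((j.val : ℕ) : ZMod s) = j := by
      rw [ZMod.natCast_val, ZMod.cast_id]
    have h2 := Finset.sum_eq_zero_iff.1 h j.val (Finset.mem_range.2 (ZMod.val_lt j))
    rw [← hj]
    exact h2
  · intro h
    apply Finset.sum_eq_zero
    intro i hi
    rw [← PfAux.iscore_iff r hr]
    exact h _
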